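/- arXiv:2305.15979 — 3 statements merged into one kernel-verified Lean document; each statement's English description precedes it below -/
import Mathlib

section
/- Let N ≥ 1, let A be an N×N matrix of positive integers, let B be an N×N integer matrix with A_{ij} + B_{ij} ≥ 1 for all i,j, and let a,b ∈ {1,…,N}. Let E^{ab} be the N×N matrix with entry 1 at position (a,b) and 0 elsewhere. Then F(B, A + E^{ab}) = F(B, A) · ( (A_{ab} + B_{ab}) / A_{ab} ) · ( A_a / (A_a + B_a) ), where A_a = ∑_{j=1}^N A_{aj} and B_a = ∑_{j=1}^N B_{aj}. -/
open Finset

/-- The update factor `F(B, A)` from the paper. -/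
noncomputable def Ffactor {N : ℕ} (B : Fin N → Fin N → ℤ) (A : Fin N → Fin N → ℕ) : ℝ :=
  ((∏ i ∈ univ.filter (fun i => (∑ j, B i j) < 0),
      ∏ k ∈ range (∑ j, B i j).natAbs, ((∑ j, (A i j : ℝ)) - k - 1)) /
    (∏ i ∈ univ.filter (fun i => 0 < (∑ j, B i j)),
      ∏ k ∈ range (∑ j, B i j).toNat, ((∑ j, (A i j : ℝ)) + k))) *
  ∏ i, ((∏ j ∈ univ.filter (fun j => 0 < B i j),
          ∏ k ∈ range (B i j).toNat, ((A i j : ℝ) + k)) /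
        (∏ j ∈ univ.filter (fun j => B i j < 0),
          ∏ k ∈ range (B i j).natAbs, ((A i j : ℝ) - k - 1)))

namespace FfactorAux

/-- Rising-type product `x (x+1) ⋯ (x+n-1)`. -/
noncomputable def up (x : ℝ) (n : ℕ) : ℝ := ∏ k ∈ range n, (x + k)

/-- Falling-type product `(x-1)(x-2) ⋯ (x-n)`. -/
noncomputable def dn (x : ℝ) (n : ℕ) : ℝ := ∏ k ∈ range n, (x - k - 1)

lemma up_succ_left (x : ℝ) (n : ℕ) : up (x + 1) n * x = up x n * (x + n) := by
  induction n with
  | zero => simp [up]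
  | succ n ih =>
    simp only [up, prod_range_succ] at ih ⊢
    push_cast
    push_cast at ih
    linear_combination (x + 1 + (n : ℝ)) * ih

lemma dn_succ_left (x : ℝ) (n : ℕ) : dn (x + 1) n * (x - n) = dn x n * x := by
  induction n with
  | zero => simp [dn]
  | succ n ih =>
    simp only [dn, prod_range_succ] at ih ⊢
    push_cast
    push_cast at ih
    linear_combination (x - (n : ℝ) - 1) * ih

lemma up_pos {x : ℝ} (hx : 0 < x) (n : ℕ) : 0 < up x n := by
  refine Finset.prod_pos fun k _ => ?_
  positivity

lemma dn_pos {x : ℝ} {n : ℕ} (h : 0 < x - n) : 0 < dn x n := by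
  refine Finset.prod_pos fun k hk => ?_
  have hk' : (k : ℝ) + 1 ≤ n := by
    have := Finset.mem_range.1 hk
    exact_mod_cast this
  linarith

/-- The per-entry factor of `Ffactor`. -/
noncomputable def ef (x : ℝ) (m : ℤ) : ℝ :=
  (if 0 < m then up x m.toNat else 1) / (if m < 0 then dn x m.natAbs else 1)

lemma ef_pos {x : ℝ} {m : ℤ} (hx : 0 < x) (hxm : 0 < x + (m : ℝ)) : 0 < ef x m := by
  unfold ef
  rcases lt_trichotomy m 0 with hm | hm | hm
  · have hcast : (m.natAbs : ℝ) = -(m : ℝ) := by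
      rw [Nat.cast_natAbs]
      simp [abs_of_neg (show (m : ℝ) < 0 by exact_mod_cast hm)]
    simp only [if_neg (lt_asymm hm), if_pos hm]
    exact div_pos one_pos (dn_pos (by rw [hcast]; linarith))
  · subst hm; simp
  · simp only [if_pos hm, if_neg (lt_asymm hm)]
    simpa using up_pos hx m.toNat

lemma ef_succ {x : ℝ} (m : ℤ) (hx : 0 < x) (hxm : 0 < x + (m : ℝ)) :
    ef (x + 1) m = ef x m * ((x + (m : ℝ)) / x) := by
  unfold ef
  rcases lt_trichotomy m 0 with hm | hm | hm
  · have hcast : (m.natAbs : ℝ) = -(m : ℝ) := by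
      rw [Nat.cast_natAbs]
      simp [abs_of_neg (show (m : ℝ) < 0 by exact_mod_cast hm)]
    simp only [if_neg (lt_asymm hm), if_pos hm]
    have h1 : 0 < x - (m.natAbs : ℝ) := by rw [hcast]; linarith
    have h2 : 0 < dn x m.natAbs := dn_pos h1
    have h3 : 0 < dn (x + 1) m.natAbs := dn_pos (by linarith)
    have key := dn_succ_left x m.natAbs
    have hxn : x + (m : ℝ) = x - (m.natAbs : ℝ) := by rw [hcast]; ring
    rw [hxn]
    field_simp
    linear_combination -key
  · subst hm; simp [div_self hx.ne']
  · simp only [if_pos hm, if_neg (lt_asymm hm)]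
    have hcast : ((m.toNat : ℕ) : ℝ) = (m : ℝ) := by exact_mod_cast Int.toNat_of_nonneg hm.le
    have key := up_succ_left x m.toNat
    rw [hcast] at key
    field_simp
    nlinarith [key]

lemma Ffactor_eq {N : ℕ} (B : Fin N → Fin N → ℤ) (A : Fin N → Fin N → ℕ) :
    Ffactor B A = ∏ i, ((ef (∑ j, (A i j : ℝ)) (∑ j, B i j))⁻¹ *
      ∏ j, ef ((A i j : ℝ)) (B i j)) := by
  unfold Ffactor
  rw [prod_mul_distrib]
  congr 1
  · simp only [ef, inv_div, prod_div_distrib]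
    rw [prod_filter, prod_filter]
    rfl
  · refine prod_congr rfl fun i _ => ?_
    simp only [ef, prod_div_distrib]
    rw [prod_filter, prod_filter]
    rfl

end FfactorAux

open FfactorAux in
/-- one-step update rule
`F(B, A + E^{ab}) = F(B, A) · ((A_ab + B_ab)/A_ab) · (A_a/(A_a + B_a))`,
where `E^{ab}` is the matrix with a single `1` at position `(a,b)`. -/
theorem Ffactor_update {N : ℕ} (hN : 1 ≤ N)
    (A : Fin N → Fin N → ℕ) (B : Fin N → Fin N → ℤ)
    (hA : ∀ i j, 1 ≤ A i j) (hAB : ∀ i j, 1 ≤ (A i j : ℤ) + B i j)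
    (a b : Fin N) :
    Ffactor B (fun i j => A i j + if i = a ∧ j = b then 1 else 0)
      = Ffactor B A
        * (((A a b : ℝ) + (B a b : ℝ)) / (A a b : ℝ))
        * ((∑ j, (A a j : ℝ)) / ((∑ j, (A a j : ℝ)) + ∑ j, (B a j : ℝ))) := by
  classical
  rw [Ffactor_eq, Ffactor_eq]
  have hx : (0 : ℝ) < (A a b : ℝ) := by exact_mod_cast hA a b
  have hxm : (0 : ℝ) < (A a b : ℝ) + (B a b : ℝ) := by
    have h := hAB a b
    have h' : (1 : ℝ) ≤ (A a b : ℝ) + (B a b : ℝ) := by exact_mod_cast h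
    linarith
  have hS : (0 : ℝ) < ∑ j, (A a j : ℝ) := by
    refine Finset.sum_pos (fun j _ => ?_) ⟨a, mem_univ a⟩
    exact_mod_cast hA a j
  have hSM : (0 : ℝ) < (∑ j, (A a j : ℝ)) + ∑ j, (B a j : ℝ) := by
    rw [← Finset.sum_add_distrib]
    refine Finset.sum_pos (fun j _ => ?_) ⟨a, mem_univ a⟩
    have h := hAB a j
    have h' : (1 : ℝ) ≤ (A a j : ℝ) + (B a j : ℝ) := by exact_mod_cast h
    linarith
  set c1 : ℝ := ((A a b : ℝ) + (B a b : ℝ)) / (A a b : ℝ) with hc1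
  set c2 : ℝ := (∑ j, (A a j : ℝ)) / ((∑ j, (A a j : ℝ)) + ∑ j, (B a j : ℝ)) with hc2
  have hrow : ∀ i : Fin N,
      (ef (∑ j, (((A i j + if i = a ∧ j = b then 1 else 0 : ℕ)) : ℝ)) (∑ j, B i j))⁻¹ *
        ∏ j, ef (((A i j + if i = a ∧ j = b then 1 else 0 : ℕ) : ℝ)) (B i j)
      = ((ef (∑ j, (A i j : ℝ)) (∑ j, B i j))⁻¹ * ∏ j, ef ((A i j : ℝ)) (B i j)) *
          (if i = a then c1 * c2 else 1) := by
    intro i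
    by_cases hia : i = a
    · subst hia
      simp only [eq_self_iff_true, true_and, if_true]
      -- entrywise factor
      have hent : ∀ j : Fin N,
          ef (((A i j + if j = b then 1 else 0 : ℕ) : ℝ)) (B i j)
          = ef ((A i j : ℝ)) (B i j) * (if j = b then c1 else 1) := by
        intro j
        by_cases hjb : j = b
        · have hxj : (0 : ℝ) < (A i j : ℝ) := by exact_mod_cast hA i j
          have hxmj : (0 : ℝ) < (A i j : ℝ) + (B i j : ℝ) := by
            have h' : (1 : ℝ) ≤ (A i j : ℝ) + (B i j : ℝ) := by exact_mod_cast hAB i j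
            linarith
          rw [show ((A i j + if j = b then 1 else 0 : ℕ) : ℝ) = (A i j : ℝ) + 1 by
                rw [if_pos hjb]; push_cast; ring,
              ef_succ (B i j) hxj hxmj, if_pos hjb, hc1, hjb]
        · simp [hjb]
      have hprod : ∏ j, ef (((A i j + if j = b then 1 else 0 : ℕ) : ℝ)) (B i j)
          = (∏ j, ef ((A i j : ℝ)) (B i j)) * c1 := by
        rw [Finset.prod_congr rfl (fun j _ => hent j), Finset.prod_mul_distrib,
          Finset.prod_ite_eq' univ b (fun _ => c1), if_pos (mem_univ b)]
      have hsum : ∑ j, (((A i j + if j = b then 1 else 0 : ℕ)) : ℝ)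
          = (∑ j, (A i j : ℝ)) + 1 := by
        push_cast
        rw [Finset.sum_add_distrib]
        congr 1
        simp
      have hMr : ((∑ j, B i j : ℤ) : ℝ) = ∑ j, (B i j : ℝ) := by push_cast; ring
      rw [hprod, hsum, ef_succ (∑ j, B i j) hS (by rw [hMr]; exact hSM),
        mul_inv, inv_div, hMr]
      rw [hc2]
      ring
    · simp [hia]
  rw [Finset.prod_congr rfl (fun i _ => hrow i), Finset.prod_mul_distrib,
    Finset.prod_ite_eq' univ a (fun _ => c1 * c2), if_pos (mem_univ a)]
  ring
end

section
/- Fix Q = {1,…,N}, a parameter matrix θ ∈ ℕ^{N×N} with all entries ≥ 1, and an integer exponent matrix d ∈ ℤ^{N×N} with row sums d_i = ∑_j d_{ij}. Let w be a nonempty finite word over Q whose last letter is a, and let b ∈ Q. If c̄_{ij}(w) + d_{ij} ≥ 1 for all i,j ∈ Q (the consistency condition), then H(wb) = H(w) · ( (c̄_{ab}(w) + d_{ab}) / c̄_{ab}(w) ) · ( c̄_a(w) / (c̄_a(w) + d_a) ), where wb denotes the word w followed by the letter b; moreover the consistency condition also holds for wb. -/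
open Finset

/-- `countPairs w i j` = number of (consecutive) transitions from `i` to `j` in the word `w`. -/
def countPairs {N : ℕ} (w : List (Fin N)) (i j : Fin N) : ℕ :=
  (w.zip w.tail).count (i, j)

/-- `c̄_{ij}(w) = c_{ij}(w) + θ_{ij}`. -/
def cbar {N : ℕ} (θ : Fin N → Fin N → ℕ) (w : List (Fin N)) (i j : Fin N) : ℕ :=
  countPairs w i j + θ i j

/-- `c̄_i(w) = c_i(w) + ∑_j θ_{ij}`. -/
def cbarRow {N : ℕ} (θ : Fin N → Fin N → ℕ) (w : List (Fin N)) (i : Fin N) : ℕ :=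
  (∑ j, countPairs w i j) + ∑ j, θ i j

/-- `P(n, k) = n (n-1) ⋯ (n-k+1)`, the number of permutations of `k` items from `n`. -/
noncomputable def Pperm (n : ℤ) (k : ℕ) : ℝ :=
  ∏ t ∈ range k, ((n : ℝ) - t)

/-- Row sums `d_i = ∑_j d_{ij}` of the exponent matrix. -/
def drow {N : ℕ} (d : Fin N → Fin N → ℤ) (i : Fin N) : ℤ := ∑ j, d i j

/-- The quantity `H(w)` of the paper (Eq. (5)): the posterior expectation of the
monomial `∏ M_{ij}^{d_{ij}}` under the matrix-beta prior with parameter `θ`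
after observing the word `w`. -/
noncomputable def Hfun {N : ℕ} (θ : Fin N → Fin N → ℕ) (d : Fin N → Fin N → ℤ)
    (w : List (Fin N)) : ℝ :=
  ((∏ i, ∏ j ∈ univ.filter (fun j => 0 < d i j),
      Pperm ((cbar θ w i j : ℤ) - 1 + d i j) (d i j).toNat) /
    (∏ i ∈ univ.filter (fun i => 0 < drow d i),
      Pperm ((cbarRow θ w i : ℤ) - 1 + drow d i) (drow d i).toNat)) *
  ((∏ i ∈ univ.filter (fun i => drow d i < 0),
      Pperm ((cbarRow θ w i : ℤ) - 1) (drow d i).natAbs) /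
    (∏ i, ∏ j ∈ univ.filter (fun j => d i j < 0),
      Pperm ((cbar θ w i j : ℤ) - 1) (d i j).natAbs))


lemma ztail {α : Type*} (b : α) : ∀ (w : List α) (hw : w ≠ []),
    (w ++ [b]).zip (w ++ [b]).tail = w.zip w.tail ++ [(w.getLast hw, b)]
  | [], hw => absurd rfl hw
  | [x], _ => by simp
  | x :: y :: ys, _ => by
    have ih := ztail b (y :: ys) (by simp)
    simp only [List.cons_append, List.tail_cons, List.zip_cons_cons] at *
    rw [ih]
    simp [List.getLast]

lemma countPairs_append {N : ℕ} (w : List (Fin N)) (hw : w ≠ []) (b i j : Fin N) :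
    countPairs (w ++ [b]) i j
      = countPairs w i j + if i = w.getLast hw ∧ j = b then 1 else 0 := by
  unfold countPairs
  rw [ztail b w hw, List.count_append]
  congr 1
  by_cases h : i = w.getLast hw ∧ j = b
  · obtain ⟨h1, h2⟩ := h; subst h1; subst h2; simp [List.count_singleton]
  · rw [if_neg h, List.count_eq_zero]
    simp only [List.mem_singleton]
    intro e
    exact h ⟨congrArg Prod.fst e, congrArg Prod.snd e⟩

lemma Pperm_succ (n : ℤ) (k : ℕ) :
    Pperm (n + 1) k * ((n : ℝ) + 1 - k) = ((n : ℝ) + 1) * Pperm n k := by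
  unfold Pperm
  have h1 : (∏ t ∈ range k, (((n+1 : ℤ) : ℝ) - t)) * ((n:ℝ) + 1 - k)
      = ∏ t ∈ range (k+1), (((n+1:ℤ) : ℝ) - t) := by
    rw [Finset.prod_range_succ]; push_cast; ring_nf
  rw [h1, Finset.prod_range_succ']
  push_cast
  ring_nf

lemma Pperm_pos (n : ℤ) (k : ℕ) (h : (k : ℤ) ≤ n) : 0 < Pperm n k := by
  apply Finset.prod_pos
  intro t ht
  have h1 : (t : ℝ) < k := by exact_mod_cast Finset.mem_range.mp ht
  have h2 : (k : ℝ) ≤ n := by exact_mod_cast h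
  linarith

lemma prod_ratio {α : Type*} [DecidableEq α] (S : Finset α) (f g : α → ℝ) (b : α)
    (h : ∀ j ∈ S, j ≠ b → g j = f j) (hf : b ∈ S → f b ≠ 0) :
    ∏ j ∈ S, g j = (∏ j ∈ S, f j) * (if b ∈ S then g b / f b else 1) := by
  by_cases hb : b ∈ S
  · rw [if_pos hb, ← Finset.mul_prod_erase S g hb, ← Finset.mul_prod_erase S f hb,
      Finset.prod_congr rfl (fun j hj => h j (Finset.mem_of_mem_erase hj) (Finset.ne_of_mem_erase hj))]
    field_simp [hf hb]
  · rw [if_neg hb, mul_one]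
    exact Finset.prod_congr rfl fun j hj => h j hj (fun e => hb (e ▸ hj))

lemma Pperm_succ_div (n : ℤ) (k : ℕ) (h : (n:ℝ) + 1 - k ≠ 0) :
    Pperm (n + 1) k = Pperm n k * (((n:ℝ) + 1) / ((n:ℝ) + 1 - k)) := by
  have h2 := Pperm_succ n k
  field_simp
  linear_combination h2

lemma prod_ratio2 {α β : Type*} [DecidableEq α] [DecidableEq β]
    (S : Finset α) (T : α → Finset β) (f g : α → β → ℝ) (a : α) (b : β)
    (h : ∀ i j, ¬(i = a ∧ j = b) → g i j = f i j)
    (hf : ∀ j ∈ T a, f a j ≠ 0) :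
    ∏ i ∈ S, ∏ j ∈ T i, g i j
      = (∏ i ∈ S, ∏ j ∈ T i, f i j)
        * (if a ∈ S ∧ b ∈ T a then g a b / f a b else 1) := by
  have hfp : (∏ j ∈ T a, f a j) ≠ 0 := Finset.prod_ne_zero_iff.mpr hf
  rw [prod_ratio S (fun i => ∏ j ∈ T i, f i j) (fun i => ∏ j ∈ T i, g i j) a
    (fun i _ hi => Finset.prod_congr rfl fun j _ => h i j (fun hc => hi hc.1)) (fun _ => hfp)]
  rw [prod_ratio (T a) (f a) (g a) b (fun j _ hj => h a j (fun hc => hj hc.2))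
    (fun hb => hf b hb)]
  congr 1
  by_cases hbT : b ∈ T a
  · by_cases haS : a ∈ S
    · rw [if_pos haS, if_pos hbT, if_pos (⟨haS, hbT⟩ : a ∈ S ∧ b ∈ T a), mul_comm,
        mul_div_assoc, div_self hfp, mul_one]
    · rw [if_neg haS, if_neg (fun hc : a ∈ S ∧ b ∈ T a => haS hc.1)]
  · by_cases haS : a ∈ S
    · rw [if_pos haS, if_neg hbT, if_neg (fun hc : a ∈ S ∧ b ∈ T a => hbT hc.2), mul_one,
        div_self hfp]
    · rw [if_neg haS, if_neg (fun hc : a ∈ S ∧ b ∈ T a => haS hc.1)]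

lemma alg_combine (A B C D α β γ δ : ℝ) (hB : B ≠ 0) (hD : D ≠ 0)
    (hβ : β ≠ 0) (hδ : δ ≠ 0) :
    (A * α) / (B * β) * ((C * γ) / (D * δ))
      = (A / B) * (C / D) * ((α / δ) * (γ / β)) := by
  field_simp

/-- incremental computation of the posterior expectation.
If the consistency condition `c̄_{ij}(w) + d_{ij} ≥ 1` holds, then
`H(wb) = H(w) · ((c̄_{ab}(w)+d_{ab})/c̄_{ab}(w)) · (c̄_a(w)/(c̄_a(w)+d_a))`,
where `a` is the last letter of `w`; moreover consistency also holds for `wb`. -/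
theorem Hfun_update {N : ℕ} (θ : Fin N → Fin N → ℕ) (hθ : ∀ i j, 1 ≤ θ i j)
    (d : Fin N → Fin N → ℤ) (w : List (Fin N)) (hw : w ≠ []) (a b : Fin N)
    (ha : w.getLast hw = a)
    (hcons : ∀ i j, 1 ≤ (cbar θ w i j : ℤ) + d i j) :
    Hfun θ d (w ++ [b])
        = Hfun θ d w
          * (((cbar θ w a b : ℝ) + (d a b : ℝ)) / (cbar θ w a b : ℝ))
          * ((cbarRow θ w a : ℝ) / ((cbarRow θ w a : ℝ) + (drow d a : ℝ))) ∧
      (∀ i j, 1 ≤ (cbar θ (w ++ [b]) i j : ℤ) + d i j) := by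
  classical
  -- update formulas
  have hcc : ∀ i j, cbar θ (w ++ [b]) i j
      = cbar θ w i j + if i = a ∧ j = b then 1 else 0 := by
    intro i j
    unfold cbar
    rw [countPairs_append w hw b i j, ha]
    ring
  have hrr : ∀ i, cbarRow θ (w ++ [b]) i = cbarRow θ w i + if i = a then 1 else 0 := by
    intro i
    unfold cbarRow
    have h1 : ∑ j, countPairs (w ++ [b]) i j
        = (∑ j, countPairs w i j) + ∑ j : Fin N, (if i = a ∧ j = b then 1 else 0) := by
      rw [← Finset.sum_add_distrib]
      exact Finset.sum_congr rfl fun j _ => by rw [countPairs_append w hw b i j, ha]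
    have h2 : ∑ j : Fin N, (if i = a ∧ j = b then 1 else 0) = if i = a then 1 else 0 := by
      by_cases hia : i = a <;> simp [hia]
    rw [h1, h2]; ring
  -- consistency for the extended word
  have hcons' : ∀ i j, 1 ≤ (cbar θ (w ++ [b]) i j : ℤ) + d i j := by
    intro i j
    have h0 := hcons i j
    rw [hcc i j]
    by_cases hc : i = a ∧ j = b
    · rw [if_pos hc]; push_cast; linarith
    · rw [if_neg hc]; push_cast; linarith
  refine ⟨?_, hcons'⟩
  -- basic positivity
  have hcb1 : ∀ i j, 1 ≤ cbar θ w i j := fun i j => le_trans (hθ i j) (Nat.le_add_left _ _)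
  have hrow1 : ∀ i, 1 ≤ cbarRow θ w i := by
    intro i
    have h1 : 1 ≤ ∑ j, θ i j :=
      le_trans (hθ i a) (Finset.single_le_sum (fun j _ => Nat.zero_le _) (Finset.mem_univ a))
    unfold cbarRow; omega
  have hrowd : ∀ i, 1 ≤ (cbarRow θ w i : ℤ) + drow d i := by
    intro i
    have h1 : (cbarRow θ w i : ℤ) + drow d i = ∑ j, ((cbar θ w i j : ℤ) + d i j) := by
      unfold cbarRow cbar drow
      push_cast
      rw [Finset.sum_add_distrib, Finset.sum_add_distrib]
    rw [h1]
    calc (1:ℤ) ≤ (cbar θ w i a : ℤ) + d i a := hcons i a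
      _ ≤ ∑ j, ((cbar θ w i j : ℤ) + d i j) :=
          Finset.single_le_sum (fun j _ => le_trans zero_le_one (hcons i j)) (Finset.mem_univ a)
  have hx : (0:ℝ) < (cbar θ w a b : ℝ) := by
    have := hcb1 a b; exact_mod_cast Nat.lt_of_lt_of_le Nat.zero_lt_one this
  have hxd : (0:ℝ) < (cbar θ w a b : ℝ) + (d a b : ℝ) := by
    have := hcons a b
    have h2 : (1:ℝ) ≤ (cbar θ w a b : ℝ) + (d a b : ℝ) := by exact_mod_cast this
    linarith
  have hy : (0:ℝ) < (cbarRow θ w a : ℝ) := by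
    have := hrow1 a; exact_mod_cast Nat.lt_of_lt_of_le Nat.zero_lt_one this
  have hyd : (0:ℝ) < (cbarRow θ w a : ℝ) + (drow d a : ℝ) := by
    have := hrowd a
    have h2 : (1:ℝ) ≤ (cbarRow θ w a : ℝ) + (drow d a : ℝ) := by exact_mod_cast this
    linarith
  -- positivity of all Pperm factors (for w)
  have hP1 : ∀ i j, 0 < d i j →
      0 < Pperm ((cbar θ w i j : ℤ) - 1 + d i j) (d i j).toNat := by
    intro i j hij
    apply Pperm_pos
    have := hcb1 i j; omega
  have hP2 : ∀ i, 0 < drow d i →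
      0 < Pperm ((cbarRow θ w i : ℤ) - 1 + drow d i) (drow d i).toNat := by
    intro i hi
    apply Pperm_pos
    have := hrow1 i; omega
  have hP3 : ∀ i, drow d i < 0 →
      0 < Pperm ((cbarRow θ w i : ℤ) - 1) (drow d i).natAbs := by
    intro i hi
    apply Pperm_pos
    have := hrowd i; omega
  have hP4 : ∀ i j, d i j < 0 →
      0 < Pperm ((cbar θ w i j : ℤ) - 1) (d i j).natAbs := by
    intro i j hij
    apply Pperm_pos
    have := hcons i j; omega
  -- key single-factor ratios
  have hkey1 : 0 < d a b →
      Pperm ((cbar θ (w ++ [b]) a b : ℤ) - 1 + d a b) (d a b).toNat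
        = Pperm ((cbar θ w a b : ℤ) - 1 + d a b) (d a b).toNat
          * (((cbar θ w a b : ℝ) + (d a b : ℝ)) / (cbar θ w a b : ℝ)) := by
    intro hd
    have hk : (((d a b).toNat : ℕ) : ℝ) = (d a b : ℝ) := by
      exact_mod_cast Int.toNat_of_nonneg hd.le
    have harg : (cbar θ (w ++ [b]) a b : ℤ) - 1 + d a b
        = ((cbar θ w a b : ℤ) - 1 + d a b) + 1 := by
      rw [hcc a b, if_pos ⟨rfl, rfl⟩]; push_cast; ring
    have hden : ((((cbar θ w a b : ℤ) - 1 + d a b : ℤ)) : ℝ) + 1 - ((d a b).toNat : ℕ)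
        = (cbar θ w a b : ℝ) := by
      rw [hk]; push_cast; ring
    have hnum : ((((cbar θ w a b : ℤ) - 1 + d a b : ℤ)) : ℝ) + 1
        = (cbar θ w a b : ℝ) + (d a b : ℝ) := by
      push_cast; ring
    rw [harg, Pperm_succ_div _ _ (by rw [hden]; exact hx.ne'), hden, hnum]
  have hkey4 : d a b < 0 →
      Pperm ((cbar θ (w ++ [b]) a b : ℤ) - 1) (d a b).natAbs
        = Pperm ((cbar θ w a b : ℤ) - 1) (d a b).natAbs
          * ((cbar θ w a b : ℝ) / ((cbar θ w a b : ℝ) + (d a b : ℝ))) := by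
    intro hd
    have hk : (((d a b).natAbs : ℕ) : ℝ) = -(d a b : ℝ) := by
      rw [Nat.cast_natAbs]
      exact_mod_cast abs_of_nonpos hd.le
    have harg : (cbar θ (w ++ [b]) a b : ℤ) - 1 = ((cbar θ w a b : ℤ) - 1) + 1 := by
      rw [hcc a b, if_pos ⟨rfl, rfl⟩]; push_cast; ring
    have hden : ((((cbar θ w a b : ℤ) - 1 : ℤ)) : ℝ) + 1 - ((d a b).natAbs : ℕ)
        = (cbar θ w a b : ℝ) + (d a b : ℝ) := by
      rw [hk]; push_cast; ring
    have hnum : ((((cbar θ w a b : ℤ) - 1 : ℤ)) : ℝ) + 1 = (cbar θ w a b : ℝ) := by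
      push_cast; ring
    rw [harg, Pperm_succ_div _ _ (by rw [hden]; exact hxd.ne'), hden, hnum]
  have hkey2 : 0 < drow d a →
      Pperm ((cbarRow θ (w ++ [b]) a : ℤ) - 1 + drow d a) (drow d a).toNat
        = Pperm ((cbarRow θ w a : ℤ) - 1 + drow d a) (drow d a).toNat
          * (((cbarRow θ w a : ℝ) + (drow d a : ℝ)) / (cbarRow θ w a : ℝ)) := by
    intro hd
    have hk : (((drow d a).toNat : ℕ) : ℝ) = (drow d a : ℝ) := by
      exact_mod_cast Int.toNat_of_nonneg hd.le
    have harg : (cbarRow θ (w ++ [b]) a : ℤ) - 1 + drow d a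
        = ((cbarRow θ w a : ℤ) - 1 + drow d a) + 1 := by
      rw [hrr a, if_pos rfl]; push_cast; ring
    have hden : ((((cbarRow θ w a : ℤ) - 1 + drow d a : ℤ)) : ℝ) + 1 - ((drow d a).toNat : ℕ)
        = (cbarRow θ w a : ℝ) := by
      rw [hk]; push_cast; ring
    have hnum : ((((cbarRow θ w a : ℤ) - 1 + drow d a : ℤ)) : ℝ) + 1
        = (cbarRow θ w a : ℝ) + (drow d a : ℝ) := by
      push_cast; ring
    rw [harg, Pperm_succ_div _ _ (by rw [hden]; exact hy.ne'), hden, hnum]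
  have hkey3 : drow d a < 0 →
      Pperm ((cbarRow θ (w ++ [b]) a : ℤ) - 1) (drow d a).natAbs
        = Pperm ((cbarRow θ w a : ℤ) - 1) (drow d a).natAbs
          * ((cbarRow θ w a : ℝ) / ((cbarRow θ w a : ℝ) + (drow d a : ℝ))) := by
    intro hd
    have hk : (((drow d a).natAbs : ℕ) : ℝ) = -(drow d a : ℝ) := by
      rw [Nat.cast_natAbs]
      exact_mod_cast abs_of_nonpos hd.le
    have harg : (cbarRow θ (w ++ [b]) a : ℤ) - 1 = ((cbarRow θ w a : ℤ) - 1) + 1 := by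
      rw [hrr a, if_pos rfl]; push_cast; ring
    have hden : ((((cbarRow θ w a : ℤ) - 1 : ℤ)) : ℝ) + 1 - ((drow d a).natAbs : ℕ)
        = (cbarRow θ w a : ℝ) + (drow d a : ℝ) := by
      rw [hk]; push_cast; ring
    have hnum : ((((cbarRow θ w a : ℤ) - 1 : ℤ)) : ℝ) + 1 = (cbarRow θ w a : ℝ) := by
      push_cast; ring
    rw [harg, Pperm_succ_div _ _ (by rw [hden]; exact hyd.ne'), hden, hnum]
  -- the four product updates
  have hA : (∏ i, ∏ j ∈ univ.filter (fun j => 0 < d i j),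
        Pperm ((cbar θ (w ++ [b]) i j : ℤ) - 1 + d i j) (d i j).toNat)
      = (∏ i, ∏ j ∈ univ.filter (fun j => 0 < d i j),
        Pperm ((cbar θ w i j : ℤ) - 1 + d i j) (d i j).toNat)
        * (if 0 < d a b then
            ((cbar θ w a b : ℝ) + (d a b : ℝ)) / (cbar θ w a b : ℝ) else 1) := by
    rw [prod_ratio2 univ (fun i => univ.filter (fun j => 0 < d i j))
        (fun i j => Pperm ((cbar θ w i j : ℤ) - 1 + d i j) (d i j).toNat)
        (fun i j => Pperm ((cbar θ (w ++ [b]) i j : ℤ) - 1 + d i j) (d i j).toNat) a b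
        (fun i j hc => by beta_reduce; rw [hcc i j, if_neg hc, Nat.add_zero])
        (fun j hj => (hP1 a j (Finset.mem_filter.mp hj).2).ne')]
    congr 1
    by_cases hd : 0 < d a b
    · rw [if_pos ⟨Finset.mem_univ a, Finset.mem_filter.mpr ⟨Finset.mem_univ b, hd⟩⟩,
        if_pos hd, hkey1 hd, mul_comm, mul_div_assoc, div_self (hP1 a b hd).ne', mul_one]
    · rw [if_neg (fun hc : a ∈ univ ∧ b ∈ univ.filter _ => hd (Finset.mem_filter.mp hc.2).2),
        if_neg hd]
  have hD : (∏ i, ∏ j ∈ univ.filter (fun j => d i j < 0),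
        Pperm ((cbar θ (w ++ [b]) i j : ℤ) - 1) (d i j).natAbs)
      = (∏ i, ∏ j ∈ univ.filter (fun j => d i j < 0),
        Pperm ((cbar θ w i j : ℤ) - 1) (d i j).natAbs)
        * (if d a b < 0 then
            (cbar θ w a b : ℝ) / ((cbar θ w a b : ℝ) + (d a b : ℝ)) else 1) := by
    rw [prod_ratio2 univ (fun i => univ.filter (fun j => d i j < 0))
        (fun i j => Pperm ((cbar θ w i j : ℤ) - 1) (d i j).natAbs)
        (fun i j => Pperm ((cbar θ (w ++ [b]) i j : ℤ) - 1) (d i j).natAbs) a b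
        (fun i j hc => by beta_reduce; rw [hcc i j, if_neg hc, Nat.add_zero])
        (fun j hj => (hP4 a j (Finset.mem_filter.mp hj).2).ne')]
    congr 1
    by_cases hd : d a b < 0
    · rw [if_pos ⟨Finset.mem_univ a, Finset.mem_filter.mpr ⟨Finset.mem_univ b, hd⟩⟩,
        if_pos hd, hkey4 hd, mul_comm, mul_div_assoc, div_self (hP4 a b hd).ne', mul_one]
    · rw [if_neg (fun hc : a ∈ univ ∧ b ∈ univ.filter _ => hd (Finset.mem_filter.mp hc.2).2),
        if_neg hd]
  have hB : (∏ i ∈ univ.filter (fun i => 0 < drow d i),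
        Pperm ((cbarRow θ (w ++ [b]) i : ℤ) - 1 + drow d i) (drow d i).toNat)
      = (∏ i ∈ univ.filter (fun i => 0 < drow d i),
        Pperm ((cbarRow θ w i : ℤ) - 1 + drow d i) (drow d i).toNat)
        * (if 0 < drow d a then
            ((cbarRow θ w a : ℝ) + (drow d a : ℝ)) / (cbarRow θ w a : ℝ) else 1) := by
    rw [prod_ratio (univ.filter (fun i => 0 < drow d i))
        (fun i => Pperm ((cbarRow θ w i : ℤ) - 1 + drow d i) (drow d i).toNat)
        (fun i => Pperm ((cbarRow θ (w ++ [b]) i : ℤ) - 1 + drow d i) (drow d i).toNat) a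
        (fun i _ hi => by beta_reduce; rw [hrr i, if_neg hi, Nat.add_zero])
        (fun hj => (hP2 a (Finset.mem_filter.mp hj).2).ne')]
    congr 1
    by_cases hd : 0 < drow d a
    · rw [if_pos (Finset.mem_filter.mpr ⟨Finset.mem_univ a, hd⟩), if_pos hd, hkey2 hd,
        mul_comm, mul_div_assoc, div_self (hP2 a hd).ne', mul_one]
    · rw [if_neg (fun hc : a ∈ univ.filter _ => hd (Finset.mem_filter.mp hc).2), if_neg hd]
  have hC : (∏ i ∈ univ.filter (fun i => drow d i < 0),
        Pperm ((cbarRow θ (w ++ [b]) i : ℤ) - 1) (drow d i).natAbs)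
      = (∏ i ∈ univ.filter (fun i => drow d i < 0),
        Pperm ((cbarRow θ w i : ℤ) - 1) (drow d i).natAbs)
        * (if drow d a < 0 then
            (cbarRow θ w a : ℝ) / ((cbarRow θ w a : ℝ) + (drow d a : ℝ)) else 1) := by
    rw [prod_ratio (univ.filter (fun i => drow d i < 0))
        (fun i => Pperm ((cbarRow θ w i : ℤ) - 1) (drow d i).natAbs)
        (fun i => Pperm ((cbarRow θ (w ++ [b]) i : ℤ) - 1) (drow d i).natAbs) a
        (fun i _ hi => by beta_reduce; rw [hrr i, if_neg hi, Nat.add_zero])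
        (fun hj => (hP3 a (Finset.mem_filter.mp hj).2).ne')]
    congr 1
    by_cases hd : drow d a < 0
    · rw [if_pos (Finset.mem_filter.mpr ⟨Finset.mem_univ a, hd⟩), if_pos hd, hkey3 hd,
        mul_comm, mul_div_assoc, div_self (hP3 a hd).ne', mul_one]
    · rw [if_neg (fun hc : a ∈ univ.filter _ => hd (Finset.mem_filter.mp hc).2), if_neg hd]
  -- nonvanishing of denominators
  have hBne : (∏ i ∈ univ.filter (fun i => 0 < drow d i),
      Pperm ((cbarRow θ w i : ℤ) - 1 + drow d i) (drow d i).toNat) ≠ 0 :=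
    (Finset.prod_pos fun i hi => hP2 i (Finset.mem_filter.mp hi).2).ne'
  have hDne : (∏ i, ∏ j ∈ univ.filter (fun j => d i j < 0),
      Pperm ((cbar θ w i j : ℤ) - 1) (d i j).natAbs) ≠ 0 :=
    (Finset.prod_pos fun i _ =>
      Finset.prod_pos fun j hj => hP4 i j (Finset.mem_filter.mp hj).2).ne'
  have hβne : (if 0 < drow d a then
      ((cbarRow θ w a : ℝ) + (drow d a : ℝ)) / (cbarRow θ w a : ℝ) else 1) ≠ 0 := by
    split
    · exact (div_pos hyd hy).ne'
    · exact one_ne_zero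
  have hδne : (if d a b < 0 then
      (cbar θ w a b : ℝ) / ((cbar θ w a b : ℝ) + (d a b : ℝ)) else 1) ≠ 0 := by
    split
    · exact (div_pos hx hxd).ne'
    · exact one_ne_zero
  -- the combined scalar identities
  have e1 : (if 0 < d a b then
        ((cbar θ w a b : ℝ) + (d a b : ℝ)) / (cbar θ w a b : ℝ) else 1)
      / (if d a b < 0 then
        (cbar θ w a b : ℝ) / ((cbar θ w a b : ℝ) + (d a b : ℝ)) else 1)
      = ((cbar θ w a b : ℝ) + (d a b : ℝ)) / (cbar θ w a b : ℝ) := by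
    rcases lt_trichotomy (d a b) 0 with h | h | h
    · rw [if_neg (by omega), if_pos h, one_div, inv_div]
    · rw [if_neg (by omega), if_neg (by omega), h]
      push_cast
      rw [add_zero, div_self hx.ne', div_one]
    · rw [if_pos h, if_neg (by omega), div_one]
  have e2 : (if drow d a < 0 then
        (cbarRow θ w a : ℝ) / ((cbarRow θ w a : ℝ) + (drow d a : ℝ)) else 1)
      / (if 0 < drow d a then
        ((cbarRow θ w a : ℝ) + (drow d a : ℝ)) / (cbarRow θ w a : ℝ) else 1)
      = (cbarRow θ w a : ℝ) / ((cbarRow θ w a : ℝ) + (drow d a : ℝ)) := by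
    rcases lt_trichotomy (drow d a) 0 with h | h | h
    · rw [if_pos h, if_neg (by omega), div_one]
    · rw [if_neg (by omega), if_neg (by omega), h]
      push_cast
      rw [add_zero, div_self hy.ne', div_one]
    · rw [if_neg (by omega), if_pos h, one_div, inv_div]
  unfold Hfun
  rw [hA, hB, hC, hD, alg_combine _ _ _ _ _ _ _ _ hBne hDne hβne hδne, e1, e2]
  ring
end

section
/- Fix Q = {1,…,N} with N ≥ 2, a parameter matrix θ ∈ ℕ^{N×N} with all entries ≥ 1, a finite word w over Q with transition-count matrix C = (c_{ij}(w)), and a PSE in polynomial form φ = ∑_{k=1}^p κ_k ∏_{i,j∈Q} v_{ij}^{d^k_{ij}} with real weights κ_k and integer exponent matrices D^k. Suppose θ_{ij} + c_{ij}(w) + d^k_{ij} ≥ 1 for all i,j ∈ Q and all k ∈ {1,…,p}. Then the posterior expectation of φ(M) satisfies E_{θ,w}(φ(M)) = ∑_{k=1}^p κ_k · F(D^k, θ + C), where E_{θ,w}(g) := ( ∫_{(T_N)^N} g(M(y^1,…,y^N)) · ∏_{i,j=1}^N x_j(y^i)^{θ_{ij}+c_{ij}(w)−1} dy^1⋯dy^N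 ) / ( ∫_{(T_N)^N} ∏_{i,j=1}^N x_j(y^i)^{θ_{ij}+c_{ij}(w)−1} dy^1⋯dy^N ) and M(y^1,…,y^N) is the stochastic matrix whose i-th row is x(y^i). -/
open Finset MeasureTheory

/-- The simplex-parameterization domain
`T_N = { y ∈ ℝ^{N-1} : y_i ≥ 0, ∑ y_i ≤ 1 }` (here `N = n+1`). -/
def Tset (n : ℕ) : Set (Fin n → ℝ) :=
  {y | (∀ i, 0 ≤ y i) ∧ ∑ i, y i ≤ 1}

/-- The probability vector `x(y)` in the `(N-1)`-simplex parameterized by `y ∈ T_N`. -/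
noncomputable def simplexCoord {n : ℕ} (y : Fin n → ℝ) (i : Fin (n + 1)) : ℝ :=
  if h : (i : ℕ) < n then y ⟨i, h⟩ else 1 - ∑ j, y j

lemma my_beta_nat (a b : ℕ) :
    ∫ x in (0:ℝ)..1, x ^ a * (1 - x) ^ b
      = (a.factorial * b.factorial : ℝ) / (a + b + 1).factorial := by
  induction b generalizing a with
  | zero =>
    simp only [pow_zero, mul_one, integral_pow, one_pow, Nat.factorial_zero, Nat.cast_one,
      add_zero]
    rw [zero_pow (by omega : a + 1 ≠ 0), sub_zero, Nat.factorial_succ]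
    have : (a.factorial : ℝ) ≠ 0 := Nat.cast_ne_zero.mpr (Nat.factorial_ne_zero a)
    push_cast
    field_simp
  | succ b ih =>
    have hder : ∀ x ∈ Set.uIcc (0:ℝ) 1, HasDerivAt (fun x : ℝ => x ^ (a+1) * (1-x) ^ (b+1))
        (((a:ℝ)+1) * (x ^ a * (1-x)^(b+1)) - ((b:ℝ)+1) * (x^(a+1) * (1-x)^b)) x := by
      intro x _
      have h1 : HasDerivAt (fun x : ℝ => x ^ (a+1)) (((a:ℝ)+1) * x ^ a) x := by
        simpa using hasDerivAt_pow (a+1) x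
      have h3 : HasDerivAt (fun x : ℝ => 1 - x) (-1) x := (hasDerivAt_id x).const_sub 1
      have h2 : HasDerivAt (fun x : ℝ => (1-x) ^ (b+1)) (-(((b:ℝ)+1) * (1-x) ^ b)) x := by
        have := (hasDerivAt_pow (b+1) (1-x)).comp x h3
        exact this.congr_deriv (by push_cast; ring)
      have := h1.mul h2
      exact this.congr_deriv (by push_cast; ring)
    have c1 : Continuous fun x : ℝ => ((a:ℝ)+1) * (x ^ a * (1-x)^(b+1)) := by continuity
    have c2 : Continuous fun x : ℝ => ((b:ℝ)+1) * (x^(a+1) * (1-x)^b) := by continuity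
    have key := intervalIntegral.integral_eq_sub_of_hasDerivAt hder
      (((c1.sub c2)).intervalIntegrable 0 1)
    rw [intervalIntegral.integral_sub (c1.intervalIntegrable 0 1) (c2.intervalIntegrable 0 1),
      intervalIntegral.integral_const_mul, intervalIntegral.integral_const_mul] at key
    have hval : (1:ℝ) ^ (a+1) * (1-1) ^ (b+1) - (0:ℝ)^(a+1) * (1-0)^(b+1) = 0 := by norm_num
    rw [ih (a+1)] at key
    have ha1 : ((a:ℝ)+1) ≠ 0 := by positivity
    have h2 : ((b:ℝ)+1) ≠ 0 := by positivity
    have hfac : ∀ m : ℕ, (m.factorial : ℝ) ≠ 0 := fun m => Nat.cast_ne_zero.mpr (Nat.factorial_ne_zero m)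
    have hd : a + 1 + b + 1 = a + (b+1) + 1 := by omega
    rw [hd] at key
    simp only [hval] at key
    -- key : (a+1) * ∫ x^a (1-x)^(b+1) - (b+1) * ((a+1)! * b! / (a+(b+1)+1)!) = 0
    have : (∫ x in (0:ℝ)..1, x ^ a * (1 - x) ^ (b+1))
        = ((b:ℝ)+1) * ((((a+1).factorial : ℝ) * (b.factorial:ℝ)) / ((a + (b+1) + 1).factorial:ℝ)) / ((a:ℝ)+1) := by
      field_simp at key ⊢
      linarith [key]
    rw [this, Nat.factorial_succ a, Nat.factorial_succ b]
    push_cast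
    field_simp

lemma my_continuous_simplexCoord {n : ℕ} (j : Fin (n+1)) :
    Continuous (fun y : Fin n → ℝ => simplexCoord y j) := by
  unfold simplexCoord
  by_cases h : (j:ℕ) < n
  · simp only [dif_pos h]; exact continuous_apply _
  · simp only [dif_neg h]
    exact continuous_const.sub (continuous_finset_sum _ fun i _ => continuous_apply i)

lemma my_isClosed_Tset (n : ℕ) : IsClosed (Tset n) := by
  have : Tset n = (⋂ i, {y : Fin n → ℝ | 0 ≤ y i}) ∩ {y | ∑ i, y i ≤ 1} := by
    ext y; simp [Tset, Set.mem_iInter]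
  rw [this]
  exact (isClosed_iInter fun i => isClosed_le continuous_const (continuous_apply i)).inter
    (isClosed_le (continuous_finset_sum _ fun i _ => continuous_apply i) continuous_const)

lemma my_isCompact_Tset (n : ℕ) : IsCompact (Tset n) := by
  refine (isCompact_Icc (a := (0 : Fin n → ℝ)) (b := 1)).of_isClosed_subset
    (my_isClosed_Tset n) ?_
  intro y hy
  rw [Set.mem_Icc]
  refine ⟨fun i => hy.1 i, fun i => ?_⟩
  calc y i ≤ ∑ k, y k := Finset.single_le_sum (fun k _ => hy.1 k) (mem_univ i)
  _ ≤ 1 := hy.2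

lemma my_simplexCoord_nonneg {n : ℕ} {y : Fin n → ℝ} (hy : y ∈ Tset n) (j : Fin (n+1)) :
    0 ≤ simplexCoord y j := by
  unfold simplexCoord; split
  · exact hy.1 _
  · have := hy.2; linarith

lemma my_cons_mem_Tset {n : ℕ} {t : ℝ} {z : Fin n → ℝ} :
    Fin.cons t z ∈ Tset (n+1) ↔ 0 ≤ t ∧ (∀ k, 0 ≤ z k) ∧ t + ∑ k, z k ≤ 1 := by
  simp [Tset, Fin.forall_fin_succ, Fin.sum_cons, and_assoc]

lemma my_simplexCoord_cons_zero {n : ℕ} (t : ℝ) (z : Fin n → ℝ) :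
    simplexCoord (Fin.cons t z) (0 : Fin (n+2)) = t := by
  rw [simplexCoord, dif_pos (show ((0 : Fin (n+2)) : ℕ) < n+1 by simp)]
  have h0 : (⟨((0 : Fin (n+2)) : ℕ), by simp⟩ : Fin (n+1)) = 0 := by ext; simp
  rw [h0, Fin.cons_zero]

lemma my_simplexCoord_cons_succ {n : ℕ} (t : ℝ) (z : Fin n → ℝ) (k : Fin (n+1)) :
    simplexCoord (Fin.cons t z) k.succ
      = if h : (k:ℕ) < n then z ⟨k, h⟩ else 1 - t - ∑ i, z i := by
  rw [simplexCoord]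
  by_cases h : (k:ℕ) < n
  · rw [dif_pos (show ((k.succ : Fin (n+2)) : ℕ) < n+1 by simp [Fin.val_succ]; omega),
      dif_pos h]
    have : (⟨(k.succ : Fin (n+2)), by simp [Fin.val_succ]; omega⟩ : Fin (n+1))
        = Fin.succ ⟨(k:ℕ), h⟩ := by ext; simp [Fin.val_succ]
    rw [this, Fin.cons_succ]
  · rw [dif_neg (show ¬ ((k.succ : Fin (n+2)) : ℕ) < n+1 by simp [Fin.val_succ]; omega),
      dif_neg h, Fin.sum_cons]
    ring

lemma my_simplexCoord_cons_smul {n : ℕ} (t : ℝ) (u : Fin n → ℝ) (k : Fin (n+1)) :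
    simplexCoord (Fin.cons t ((1-t) • u)) k.succ = (1-t) * simplexCoord u k := by
  rw [my_simplexCoord_cons_succ, simplexCoord]
  by_cases h : (k:ℕ) < n
  · simp [dif_pos h]
  · simp only [dif_neg h, Pi.smul_apply, smul_eq_mul, Finset.mul_sum]
    rw [← Finset.mul_sum]
    ring

-- inner integral evaluation
lemma my_inner_eval {n : ℕ} (a : Fin (n+2) → ℕ) (t : ℝ) (ht : t ≠ 1) :
    ∫ z : Fin n → ℝ,
        (Tset (n+1)).indicator (fun y => ∏ j, simplexCoord y j ^ a j) (Fin.cons t z)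
      = Set.indicator (Set.Icc (0:ℝ) 1)
          (fun t => t ^ a 0 * (1-t) ^ (n + ∑ k : Fin (n+1), a k.succ)) t
        * ∫ u in Tset n, ∏ k : Fin (n+1), simplexCoord u k ^ a k.succ ∂volume := by
  set g : (Fin (n+1) → ℝ) → ℝ := fun y => ∏ j, simplexCoord y j ^ a j with hg
  by_cases h0 : 0 ≤ t ∧ t ≤ 1
  · have hlt : t < 1 := lt_of_le_of_ne h0.2 ht
    have hs : 0 < 1 - t := by linarith
    have hsmul := MeasureTheory.Measure.integral_comp_smul (volume : Measure (Fin n → ℝ))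
      (fun z : Fin n → ℝ => (Tset (n+1)).indicator g (Fin.cons t z)) (1-t)
    rw [Module.finrank_fin_fun] at hsmul
    have habs : |(((1-t) ^ n)⁻¹ : ℝ)| = ((1-t)^n)⁻¹ := by
      rw [abs_of_nonneg]; positivity
    rw [habs] at hsmul
    -- pointwise evaluation of the scaled integrand
    have hpt : ∀ u : Fin n → ℝ,
        (Tset (n+1)).indicator g (Fin.cons t ((1-t) • u))
          = Set.indicator (Tset n)
              (fun u => t ^ a 0 * (1-t) ^ (∑ k : Fin (n+1), a k.succ)
                * ∏ k : Fin (n+1), simplexCoord u k ^ a k.succ) u := by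
      intro u
      have hmem : Fin.cons t ((1-t) • u) ∈ Tset (n+1) ↔ u ∈ Tset n := by
        rw [my_cons_mem_Tset]
        constructor
        · rintro ⟨h1, h2, h3⟩
          constructor
          · intro k
            have := h2 k
            simp only [Pi.smul_apply, smul_eq_mul] at this
            nlinarith
          · have hsum : ∑ k, ((1-t) • u) k = (1-t) * ∑ k, u k := by
              simp [Finset.mul_sum]
            rw [hsum] at h3
            nlinarith
        · rintro ⟨h1, h2⟩
          refine ⟨h0.1, fun k => ?_, ?_⟩
          · simp only [Pi.smul_apply, smul_eq_mul]
            exact mul_nonneg hs.le (h1 k)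
          · have hsum : ∑ k, ((1-t) • u) k = (1-t) * ∑ k, u k := by
              simp [Finset.mul_sum]
            rw [hsum]; nlinarith
      by_cases hu : u ∈ Tset n
      · rw [Set.indicator_of_mem (hmem.mpr hu), Set.indicator_of_mem hu]
        simp only [hg]
        rw [Fin.prod_univ_succ]
        rw [my_simplexCoord_cons_zero]
        have : ∀ k : Fin (n+1),
            simplexCoord (Fin.cons t ((1-t) • u)) k.succ ^ a k.succ
              = (1-t) ^ a k.succ * simplexCoord u k ^ a k.succ := by
          intro k; rw [my_simplexCoord_cons_smul, mul_pow]
        rw [Finset.prod_congr rfl (fun k _ => this k), Finset.prod_mul_distrib,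
          Finset.prod_pow_eq_pow_sum]
        ring
      · rw [Set.indicator_of_notMem (fun hc => hu (hmem.mp hc)),
          Set.indicator_of_notMem hu]
    rw [funext hpt] at hsmul
    -- hsmul : ∫ u, indicator ... = ((1-t)^n)⁻¹ • ∫ z, indicator g (cons t z)
    have hI : ∫ u : Fin n → ℝ, Set.indicator (Tset n)
          (fun u => t ^ a 0 * (1-t) ^ (∑ k : Fin (n+1), a k.succ)
            * ∏ k : Fin (n+1), simplexCoord u k ^ a k.succ) u
        = t ^ a 0 * (1-t) ^ (∑ k : Fin (n+1), a k.succ)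
            * ∫ u in Tset n, ∏ k : Fin (n+1), simplexCoord u k ^ a k.succ ∂volume := by
      rw [integral_indicator (my_isClosed_Tset n).measurableSet, integral_const_mul]
    rw [hI] at hsmul
    have := congrArg (fun x : ℝ => ((1-t)^n) * x) hsmul
    simp only [smul_eq_mul, ← mul_assoc] at this
    rw [mul_inv_cancel₀ (by positivity : ((1-t):ℝ)^n ≠ 0), one_mul] at this
    rw [← this, Set.indicator_of_mem (Set.mem_Icc.mpr h0), pow_add]
    ring
  · -- t outside [0,1]
    have hzero : ∀ z : Fin n → ℝ, (Tset (n+1)).indicator g (Fin.cons t z) = 0 := by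
      intro z
      apply Set.indicator_of_notMem
      rw [my_cons_mem_Tset]
      rintro ⟨h1, h2, h3⟩
      refine h0 ⟨h1, ?_⟩
      have hz : (0:ℝ) ≤ ∑ k, z k := Finset.sum_nonneg fun k _ => h2 k
      linarith
    rw [funext hzero, Set.indicator_of_notMem (fun hc => h0 (Set.mem_Icc.mp hc))]
    simp

lemma my_dirichlet : ∀ (n : ℕ) (a : Fin (n+1) → ℕ),
    (∫ y in Tset n, ∏ j, simplexCoord y j ^ a j ∂volume)
      = (∏ j, ((a j).factorial : ℝ)) / ((∑ j, a j) + n).factorial := by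
  intro n
  induction n with
  | zero =>
    intro a
    have hT : Tset 0 = Set.univ := by
      ext y; simp [Tset]
    have hone : ∀ y : Fin 0 → ℝ, ∏ j, simplexCoord y j ^ a j = 1 := by
      intro y
      rw [Fin.prod_univ_one]
      have : simplexCoord y 0 = 1 := by simp [simplexCoord]
      rw [this, one_pow]
    rw [hT, Measure.restrict_univ, funext hone, integral_const, smul_eq_mul, mul_one]
    have hv : (volume : Measure (Fin 0 → ℝ)) Set.univ = 1 := by
      rw [volume_pi, Measure.pi_univ]; simp
    rw [measureReal_def, hv]
    simp [Fin.sum_univ_one, Fin.prod_univ_one,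
      div_self (Nat.cast_ne_zero.mpr (Nat.factorial_ne_zero _) : ((a 0).factorial : ℝ) ≠ 0)]
  | succ n ih =>
    intro a
    set g : (Fin (n+1) → ℝ) → ℝ := fun y => ∏ j, simplexCoord y j ^ a j with hgdef
    have hgc : Continuous g := continuous_finset_prod _ fun j _ =>
      (my_continuous_simplexCoord j).pow _
    have hMS : MeasurableSet (Tset (n+1)) := (my_isClosed_Tset _).measurableSet
    have hIntOn : IntegrableOn g (Tset (n+1)) volume :=
      hgc.continuousOn.integrableOn_compact (my_isCompact_Tset _)
    have hInt : Integrable ((Tset (n+1)).indicator g) volume :=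
      (integrable_indicator_iff hMS).mpr hIntOn
    rw [← integral_indicator hMS]
    have hmp := (measurePreserving_piFinSuccAbove
      (fun _ : Fin (n+1) => (volume : Measure ℝ)) 0).symm
    have h1 : (∫ y, (Tset (n+1)).indicator g y)
        = ∫ q : ℝ × (Fin n → ℝ), (Tset (n+1)).indicator g (Fin.cons q.1 q.2)
            ∂((volume : Measure ℝ).prod (Measure.pi fun _ : Fin n => (volume : Measure ℝ))) := by
      rw [volume_pi, ← hmp.integral_comp' ((Tset (n+1)).indicator g)]
      congr 1
      funext q
      congr 1
      simp [MeasurableEquiv.piFinSuccAbove_symm_apply, Fin.insertNthEquiv,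
        Fin.insertNth_zero']
    have hInt2 : Integrable
        (fun q : ℝ × (Fin n → ℝ) => (Tset (n+1)).indicator g (Fin.cons q.1 q.2))
        ((volume : Measure ℝ).prod (Measure.pi fun _ : Fin n => (volume : Measure ℝ))) := by
      have h3 : Integrable ((Tset (n+1)).indicator g ∘
          (MeasurableEquiv.piFinSuccAbove (fun _ : Fin (n+1) => ℝ) 0).symm)
          ((volume : Measure ℝ).prod (Measure.pi fun _ : Fin n => (volume : Measure ℝ))) :=
        (hmp.integrable_comp_emb (MeasurableEquiv.measurableEmbedding _)).mpr
          (by rw [← volume_pi]; exact hInt)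
      refine h3.congr (Filter.Eventually.of_forall fun q => ?_)
      simp [Function.comp, MeasurableEquiv.piFinSuccAbove_symm_apply, Fin.insertNthEquiv,
        Fin.insertNth_zero']
    rw [h1, integral_prod _ hInt2]
    have hae1 : ∀ᵐ t : ℝ ∂(volume : Measure ℝ), t ≠ 1 := by
      have hone : {t : ℝ | ¬ t ≠ 1} = {1} := by ext; simp
      rw [ae_iff, hone]; exact measure_singleton 1
    have hinner : ∀ t : ℝ, t ≠ 1 →
        (∫ z : Fin n → ℝ, (Tset (n+1)).indicator g (Fin.cons t z)
            ∂(Measure.pi fun _ : Fin n => (volume : Measure ℝ)))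
          = Set.indicator (Set.Icc (0:ℝ) 1)
              (fun t => t ^ a 0 * (1-t) ^ (n + ∑ k : Fin (n+1), a k.succ)) t
            * ∫ u in Tset n, ∏ k : Fin (n+1), simplexCoord u k ^ a k.succ ∂volume := by
      intro t ht
      rw [show (Measure.pi fun _ : Fin n => (volume : Measure ℝ))
        = (volume : Measure (Fin n → ℝ)) from (volume_pi).symm]
      exact my_inner_eval a t ht
    rw [integral_congr_ae (μ := (volume : Measure ℝ))
        (g := fun t => Set.indicator (Set.Icc (0:ℝ) 1)
              (fun t => t ^ a 0 * (1-t) ^ (n + ∑ k : Fin (n+1), a k.succ)) t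
            * ∫ u in Tset n, ∏ k : Fin (n+1), simplexCoord u k ^ a k.succ ∂volume)
        (hae1.mono fun t ht => hinner t ht)]
    rw [integral_mul_const, integral_indicator measurableSet_Icc,
      integral_Icc_eq_integral_Ioc, ← intervalIntegral.integral_of_le zero_le_one,
      my_beta_nat, ih (fun k => a k.succ)]
    set B := ∑ k : Fin (n+1), a k.succ with hB
    set P := ∏ k : Fin (n+1), ((a k.succ).factorial : ℝ) with hP
    have hsum2 : ∑ j : Fin (n+2), a j = a 0 + B := by rw [hB]; exact Fin.sum_univ_succ a
    have hprod2 : (∏ j : Fin (n+2), ((a j).factorial : ℝ))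
        = ((a 0).factorial : ℝ) * P := by
      rw [hP]; exact Fin.prod_univ_succ _
    have e2 : n + B = B + n := by omega
    have e1 : a 0 + (n + B) + 1 = a 0 + B + (n + 1) := by omega
    rw [show ((n + 1 : ℕ) + 1) = n + 2 from rfl] at *
    rw [hprod2, hsum2, e1, e2]
    have hf1 : ((B + n).factorial : ℝ) ≠ 0 := Nat.cast_ne_zero.mpr (Nat.factorial_ne_zero _)
    have hf2 : ((a 0 + B + (n+1)).factorial : ℝ) ≠ 0 :=
      Nat.cast_ne_zero.mpr (Nat.factorial_ne_zero _)
    field_simp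

lemma my_Sset_eq (n : ℕ) : {y : Fin (n + 1) → Fin n → ℝ | ∀ i, y i ∈ Tset n}
    = Set.pi Set.univ (fun _ : Fin (n+1) => Tset n) := by
  ext y; simp [Set.mem_pi]

lemma my_prod_integral (n : ℕ) (E : Fin (n+1) → Fin (n+1) → ℕ) :
    (∫ y in {y : Fin (n + 1) → Fin n → ℝ | ∀ i, y i ∈ Tset n},
        ∏ i, ∏ j, simplexCoord (y i) j ^ E i j ∂volume)
      = ∏ i, ((∏ j, ((E i j).factorial : ℝ)) / ((∑ j, E i j) + n).factorial) := by
  have hSm : MeasurableSet {y : Fin (n + 1) → Fin n → ℝ | ∀ i, y i ∈ Tset n} := by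
    rw [my_Sset_eq]
    exact MeasurableSet.univ_pi fun _ => (my_isClosed_Tset n).measurableSet
  rw [← integral_indicator hSm]
  have hpt : ∀ y : Fin (n + 1) → Fin n → ℝ,
      Set.indicator {y : Fin (n + 1) → Fin n → ℝ | ∀ i, y i ∈ Tset n}
        (fun y => ∏ i, ∏ j, simplexCoord (y i) j ^ E i j) y
      = ∏ i, Set.indicator (Tset n) (fun u => ∏ j, simplexCoord u j ^ E i j) (y i) := by
    intro y
    by_cases hy : ∀ i, y i ∈ Tset n
    · rw [Set.indicator_of_mem (show y ∈ {y : Fin (n + 1) → Fin n → ℝ | ∀ i, y i ∈ Tset n} from hy)]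
      exact Finset.prod_congr rfl fun i _ =>
        (Set.indicator_of_mem (hy i) (fun u => ∏ j, simplexCoord u j ^ E i j)).symm
    · rw [Set.indicator_of_notMem (show y ∉ {y : Fin (n + 1) → Fin n → ℝ | ∀ i, y i ∈ Tset n} from hy)]
      push_neg at hy
      obtain ⟨i0, hi0⟩ := hy
      exact (Finset.prod_eq_zero (mem_univ i0)
        (Set.indicator_of_notMem hi0 (fun u => ∏ j, simplexCoord u j ^ E i0 j))).symm
  rw [funext hpt, volume_pi, MeasureTheory.integral_fintype_prod_eq_prod
    (fun i u => Set.indicator (Tset n) (fun u => ∏ j, simplexCoord u j ^ E i j) u)]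
  exact Finset.prod_congr rfl fun i _ => by
    rw [integral_indicator (my_isClosed_Tset n).measurableSet, my_dirichlet n (E i)]

lemma my_ae_ne_zero {n : ℕ} (hn : 1 ≤ n) :
    ∀ᵐ y : Fin (n + 1) → Fin n → ℝ ∂volume, ∀ i j, simplexCoord (y i) j ≠ 0 := by
  have hzero : ∀ j : Fin (n+1), volume {z : Fin n → ℝ | simplexCoord z j = 0} = 0 := by
    intro j
    by_cases h : (j:ℕ) < n
    · have hset : {z : Fin n → ℝ | simplexCoord z j = 0} = {z | z ⟨j, h⟩ = 0} := by
        ext z; simp [simplexCoord, h]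
      rw [hset, volume_pi]
      exact Measure.pi_hyperplane _ _ 0
    · have hset : {z : Fin n → ℝ | simplexCoord z j = 0} = {z | ∑ i, z i = 1} := by
        ext z
        simp only [simplexCoord, dif_neg h, Set.mem_setOf_eq]
        constructor <;> intro hh <;> linarith
      rw [hset]
      set L : (Fin n → ℝ) →ₗ[ℝ] ℝ := ∑ i : Fin n, LinearMap.proj i with hL
      have hLapp : ∀ z : Fin n → ℝ, L z = ∑ i, z i := by
        intro z; simp [hL]
      set p₀ : Fin n → ℝ := fun _ => (n:ℝ)⁻¹ with hp
      have hnz : (n:ℝ) ≠ 0 := Nat.cast_ne_zero.mpr (by omega)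
      have hp₀ : ∑ i, p₀ i = 1 := by
        simp [hp, Finset.sum_const, card_univ]
        field_simp
      have hset2 : {z : Fin n → ℝ | ∑ i, z i = 1}
          = (fun z => z + (-p₀)) ⁻¹' ((LinearMap.ker L : Submodule ℝ (Fin n → ℝ)) : Set (Fin n → ℝ)) := by
        ext z
        simp only [Set.mem_preimage, SetLike.mem_coe, LinearMap.mem_ker, hLapp,
          Set.mem_setOf_eq, Pi.add_apply, Pi.neg_apply]
        rw [Finset.sum_add_distrib, Finset.sum_neg_distrib, hp₀]
        constructor <;> intro hh <;> linarith
      rw [hset2, measure_preimage_add_right]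
      apply Measure.addHaar_submodule
      intro hker
      have hmem : p₀ ∈ LinearMap.ker L := hker ▸ Submodule.mem_top
      rw [LinearMap.mem_ker] at hmem
      rw [hLapp, hp₀] at hmem
      norm_num at hmem
  have hbad : ∀ (i : Fin (n+1)) (j : Fin (n+1)),
      volume {y : Fin (n + 1) → Fin n → ℝ | simplexCoord (y i) j = 0} = 0 := by
    intro i j
    have hset : {y : Fin (n + 1) → Fin n → ℝ | simplexCoord (y i) j = 0}
        = Function.eval i ⁻¹' {z : Fin n → ℝ | simplexCoord z j = 0} := rfl
    rw [hset, volume_pi]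
    exact Measure.pi_eval_preimage_null _ (hzero j)
  rw [ae_all_iff]
  intro i
  rw [ae_all_iff]
  intro j
  rw [ae_iff]
  simpa [not_not] using hbad i j

lemma my_prod_add (E t : ℕ) :
    ∏ m ∈ range t, ((E:ℝ) + 1 + m) = ((E + t).factorial : ℝ) / (E.factorial : ℝ) := by
  induction t with
  | zero =>
    simp only [range_zero, prod_empty, Nat.add_zero]
    rw [div_self (Nat.cast_ne_zero.mpr (Nat.factorial_ne_zero E))]
  | succ t ih =>
    rw [Finset.prod_range_succ, ih]
    have h1 : (E + (t+1)).factorial = (E + t + 1) * (E + t).factorial := by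
      rw [show E + (t+1) = (E + t) + 1 from rfl, Nat.factorial_succ]
    rw [h1]
    have hE : ((E.factorial : ℝ)) ≠ 0 := Nat.cast_ne_zero.mpr (Nat.factorial_ne_zero _)
    field_simp
    push_cast
    ring

lemma my_prod_sub (E t : ℕ) (h : t ≤ E) :
    ∏ m ∈ range t, ((E:ℝ) - m) = (E.factorial : ℝ) / ((E - t).factorial : ℝ) := by
  induction t with
  | zero =>
    simp only [range_zero, prod_empty, Nat.sub_zero]
    rw [div_self (Nat.cast_ne_zero.mpr (Nat.factorial_ne_zero E))]
  | succ t ih =>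
    rw [Finset.prod_range_succ, ih (by omega)]
    have key : ((E - t).factorial : ℝ) = ((E:ℝ) - t) * ((E - (t+1)).factorial : ℝ) := by
      rw [show E - t = (E - (t+1)) + 1 by omega, Nat.factorial_succ]
      push_cast [Nat.cast_sub (show t+1 ≤ E from h)]
      ring
    have hne1 : ((E:ℝ) - t) ≠ 0 := by
      have : (t:ℝ) < (E:ℝ) := by exact_mod_cast (show t < E by omega)
      linarith
    have hne2 : (((E - (t+1)).factorial : ℝ)) ≠ 0 :=
      Nat.cast_ne_zero.mpr (Nat.factorial_ne_zero _)
    rw [key]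
    field_simp

lemma my_entry (A G : ℕ) (hA : 1 ≤ A) (dd : ℤ) (hG : (G:ℤ) = (A:ℤ) - 1 + dd) :
    (G.factorial : ℝ) / (((A - 1).factorial : ℝ))
      = (if 0 < dd then ∏ k ∈ range dd.toNat, ((A:ℝ) + k) else 1) /
        (if dd < 0 then ∏ k ∈ range dd.natAbs, ((A:ℝ) - k - 1) else 1) := by
  have hA1 : (((A - 1 : ℕ)) : ℝ) = (A:ℝ) - 1 := by
    push_cast [Nat.cast_sub hA]; ring
  rcases lt_trichotomy dd 0 with hd | hd | hd
  · rw [if_neg (by omega), if_pos hd]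
    have ht : dd.natAbs ≤ A - 1 := by omega
    have hGe : A - 1 - dd.natAbs = G := by omega
    have hprod : ∏ k ∈ range dd.natAbs, ((A:ℝ) - k - 1)
        = ∏ k ∈ range dd.natAbs, (((A-1:ℕ):ℝ) - k) := by
      refine Finset.prod_congr rfl fun k _ => ?_
      rw [hA1]; ring
    rw [hprod, my_prod_sub _ _ ht, hGe]
    have h1 : (((A-1).factorial : ℝ)) ≠ 0 := Nat.cast_ne_zero.mpr (Nat.factorial_ne_zero _)
    have h2 : ((G.factorial : ℝ)) ≠ 0 := Nat.cast_ne_zero.mpr (Nat.factorial_ne_zero _)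
    field_simp
  · rw [if_neg (by omega), if_neg (by omega)]
    have : G = A - 1 := by omega
    rw [this, div_self (Nat.cast_ne_zero.mpr (Nat.factorial_ne_zero _))]
    norm_num
  · rw [if_pos hd, if_neg (by omega)]
    have hGe : G = (A - 1) + dd.toNat := by omega
    have hprod : ∏ k ∈ range dd.toNat, ((A:ℝ) + k)
        = ∏ k ∈ range dd.toNat, (((A-1:ℕ):ℝ) + 1 + k) := by
      refine Finset.prod_congr rfl fun k _ => ?_
      rw [hA1]; ring
    rw [hprod, my_prod_add, hGe]
    norm_num

lemma my_Ffactor_eq {N : ℕ} (B : Fin N → Fin N → ℤ) (A : Fin N → Fin N → ℕ) :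
    Ffactor B A = ∏ i,
      (((if (∑ j, B i j) < 0 then
            ∏ k ∈ range (∑ j, B i j).natAbs, ((∑ j, (A i j : ℝ)) - k - 1) else 1) /
        (if 0 < (∑ j, B i j) then
            ∏ k ∈ range (∑ j, B i j).toNat, ((∑ j, (A i j : ℝ)) + k) else 1)) *
       ∏ j, ((if 0 < B i j then ∏ k ∈ range (B i j).toNat, ((A i j : ℝ) + k) else 1) /
             (if B i j < 0 then ∏ k ∈ range (B i j).natAbs, ((A i j : ℝ) - k - 1) else 1))) := by
  unfold Ffactor
  simp only [Finset.prod_filter, Finset.prod_mul_distrib, Finset.prod_div_distrib]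

/-- the posterior expectation of a PSE in polynomial form
`φ = ∑_k κ_k ∏_{i,j} v_{ij}^{d^k_{ij}}` under the matrix-beta posterior with
parameter `θ + C` (prior `θ` plus the transition counts `C` of the word `w`)
equals `∑_k κ_k · F(D^k, θ + C)`.  Here `Q = {1,…,N}` with `N = n+1 ≥ 2`, the
posterior expectation is the ratio of integrals over `(T_N)^N`, and
`M(y)_{ij} = x_j(y^i)`. -/
theorem bayes_posterior_expectation {n : ℕ} (hn : 1 ≤ n)
    (θ : Fin (n + 1) → Fin (n + 1) → ℕ) (hθ : ∀ i j, 1 ≤ θ i j)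
    (w : List (Fin (n + 1)))
    (p : ℕ) (κ : Fin p → ℝ) (d : Fin p → Fin (n + 1) → Fin (n + 1) → ℤ)
    (hcons : ∀ k i j, 1 ≤ (θ i j : ℤ) + (countPairs w i j : ℤ) + d k i j) :
    (∫ y in {y : Fin (n + 1) → Fin n → ℝ | ∀ i, y i ∈ Tset n},
        (∑ k, κ k * ∏ i, ∏ j, simplexCoord (y i) j ^ d k i j)
          * ∏ i, ∏ j,
              simplexCoord (y i) j ^ ((θ i j : ℤ) + (countPairs w i j : ℤ) - 1)
        ∂volume) /
      (∫ y in {y : Fin (n + 1) → Fin n → ℝ | ∀ i, y i ∈ Tset n},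
        ∏ i, ∏ j,
            simplexCoord (y i) j ^ ((θ i j : ℤ) + (countPairs w i j : ℤ) - 1)
        ∂volume)
      = ∑ k, κ k * Ffactor (d k) (fun i j => θ i j + countPairs w i j) := by
  classical
  set A : Fin (n+1) → Fin (n+1) → ℕ := fun i j => θ i j + countPairs w i j with hAdef
  have hA1 : ∀ i j, 1 ≤ A i j := fun i j => le_trans (hθ i j) (Nat.le_add_right _ _)
  have hAcast : ∀ i j, (A i j : ℤ) = (θ i j : ℤ) + (countPairs w i j : ℤ) := by
    intro i j; simp [hAdef]
  set E : Fin (n+1) → Fin (n+1) → ℕ := fun i j => A i j - 1 with hEdef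
  have hEcast : ∀ i j, (E i j : ℤ) = (θ i j : ℤ) + (countPairs w i j : ℤ) - 1 := by
    intro i j
    rw [hEdef]
    rw [Nat.cast_sub (hA1 i j), hAcast i j]
    push_cast
    ring
  set G : Fin p → Fin (n+1) → Fin (n+1) → ℕ :=
    fun k i j => ((θ i j : ℤ) + (countPairs w i j : ℤ) + d k i j - 1).toNat with hGdef
  have hGcast : ∀ k i j, (G k i j : ℤ)
      = (θ i j : ℤ) + (countPairs w i j : ℤ) + d k i j - 1 := by
    intro k i j
    rw [hGdef]
    exact Int.toNat_of_nonneg (by have := hcons k i j; omega)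
  set S := {y : Fin (n + 1) → Fin n → ℝ | ∀ i, y i ∈ Tset n} with hSdef
  have hScomp : IsCompact S := by
    rw [hSdef, my_Sset_eq]; exact isCompact_univ_pi fun _ => my_isCompact_Tset n
  -- denominator
  have hden : (∫ y in S,
        ∏ i, ∏ j, simplexCoord (y i) j ^ ((θ i j : ℤ) + (countPairs w i j : ℤ) - 1) ∂volume)
      = ∏ i, ((∏ j, ((E i j).factorial : ℝ)) / ((∑ j, E i j) + n).factorial) := by
    rw [show (fun y : Fin (n+1) → Fin n → ℝ =>
        ∏ i, ∏ j, simplexCoord (y i) j ^ ((θ i j : ℤ) + (countPairs w i j : ℤ) - 1))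
        = fun y => ∏ i, ∏ j, simplexCoord (y i) j ^ (E i j) from ?_]
    · exact my_prod_integral n E
    · funext y
      refine Finset.prod_congr rfl fun i _ => Finset.prod_congr rfl fun j _ => ?_
      rw [show ((θ i j : ℤ) + (countPairs w i j : ℤ) - 1) = ((E i j : ℕ) : ℤ) from
        (hEcast i j).symm, zpow_natCast]
  -- numerator
  have hnum_ae : ∀ᵐ y ∂(volume.restrict S),
      ((∑ k, κ k * ∏ i, ∏ j, simplexCoord (y i) j ^ d k i j)
        * ∏ i, ∏ j, simplexCoord (y i) j ^ ((θ i j : ℤ) + (countPairs w i j : ℤ) - 1))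
      = ∑ k, κ k * ∏ i, ∏ j, simplexCoord (y i) j ^ (G k i j) := by
    refine ae_restrict_of_ae ((my_ae_ne_zero hn).mono fun y hy => ?_)
    rw [Finset.sum_mul]
    refine Finset.sum_congr rfl fun k _ => ?_
    rw [mul_assoc]
    congr 1
    rw [← Finset.prod_mul_distrib]
    refine Finset.prod_congr rfl fun i _ => ?_
    rw [← Finset.prod_mul_distrib]
    refine Finset.prod_congr rfl fun j _ => ?_
    rw [← zpow_natCast (simplexCoord (y i) j) (G k i j), ← zpow_add₀ (hy i j)]
    congr 1
    rw [hGcast k i j]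
    ring
  have hnum : (∫ y in S,
        (∑ k, κ k * ∏ i, ∏ j, simplexCoord (y i) j ^ d k i j)
          * ∏ i, ∏ j, simplexCoord (y i) j ^ ((θ i j : ℤ) + (countPairs w i j : ℤ) - 1)
        ∂volume)
      = ∑ k, κ k * ∏ i, ((∏ j, ((G k i j).factorial : ℝ))
          / ((∑ j, G k i j) + n).factorial) := by
    rw [integral_congr_ae hnum_ae]
    rw [integral_finset_sum univ (fun k _ => ?_)]
    · refine Finset.sum_congr rfl fun k _ => ?_
      rw [integral_const_mul, my_prod_integral n (G k)]
    · refine Integrable.const_mul ?_ (κ k)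
      refine ContinuousOn.integrableOn_compact hScomp ?_
      exact (continuous_finset_prod _ fun i _ => continuous_finset_prod _ fun j _ =>
        ((my_continuous_simplexCoord j).comp (continuous_apply i)).pow _).continuousOn
  rw [hnum, hden, Finset.sum_div]
  refine Finset.sum_congr rfl fun k _ => ?_
  rw [mul_div_assoc, my_Ffactor_eq]
  congr 1
  rw [← Finset.prod_div_distrib]
  refine Finset.prod_congr rfl fun i _ => ?_
  -- per-row algebra
  have hAE : ∀ j, A i j = E i j + 1 := by
    intro j; simp only [hEdef]; have := hA1 i j; omega
  have hSA : ∑ j, A i j = (∑ j, E i j) + (n+1) := by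
    rw [Finset.sum_congr rfl fun j _ => hAE j, Finset.sum_add_distrib]
    simp [card_univ]
  have hGA : ∀ j, (G k i j : ℤ) = (A i j : ℤ) - 1 + d k i j := by
    intro j; rw [hGcast k i j, hAcast i j]; ring
  have hrel : (((∑ j, G k i j) + n : ℕ) : ℤ)
      = ((∑ j, A i j : ℕ) : ℤ) - 1 + (∑ j, d k i j) := by
    have h1 : ((∑ j, G k i j : ℕ) : ℤ) = ∑ j, ((A i j : ℤ) - 1 + d k i j) := by
      push_cast
      exact Finset.sum_congr rfl fun j _ => hGA j
    have h2 : ∑ j, ((A i j : ℤ) - 1 + d k i j)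
        = (∑ j, (A i j : ℤ)) - (n+1) + ∑ j, d k i j := by
      rw [Finset.sum_add_distrib, Finset.sum_sub_distrib]
      simp [card_univ]
    have h3 : ((∑ j, A i j : ℕ) : ℤ) = ∑ j, (A i j : ℤ) := by push_cast; ring
    push_cast
    push_cast at h1
    rw [h3] at *
    linarith [h1, h2]
  have hrow := my_entry (∑ j, A i j) ((∑ j, G k i j) + n)
    (by omega) (∑ j, d k i j) hrel
  have hSA1 : (∑ j, A i j) - 1 = (∑ j, E i j) + n := by omega
  rw [hSA1] at hrow
  have hent : (∏ j, ((G k i j).factorial : ℝ)) / (∏ j, ((E i j).factorial : ℝ))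
      = ∏ j, ((if 0 < d k i j then ∏ m ∈ range (d k i j).toNat, ((A i j : ℝ) + m) else 1) /
              (if d k i j < 0 then ∏ m ∈ range (d k i j).natAbs, ((A i j : ℝ) - m - 1) else 1)) := by
    rw [← Finset.prod_div_distrib]
    refine Finset.prod_congr rfl fun j _ => ?_
    have h := my_entry (A i j) (G k i j) (hA1 i j) (d k i j) (hGA j)
    rw [show E i j = A i j - 1 from by rw [hEdef]]
    exact h
  have hrow' : (((∑ j, E i j) + n).factorial : ℝ) / ((((∑ j, G k i j) + n)).factorial : ℝ)
      = (if (∑ j, d k i j) < 0 then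
            ∏ m ∈ range (∑ j, d k i j).natAbs, ((∑ j, (A i j : ℝ)) - m - 1) else 1) /
        (if 0 < (∑ j, d k i j) then
            ∏ m ∈ range (∑ j, d k i j).toNat, ((∑ j, (A i j : ℝ)) + m) else 1) := by
    have h' := congrArg Inv.inv hrow
    simp only [inv_div] at h'
    rw [show ((∑ j, (A i j : ℝ))) = ((∑ j, A i j : ℕ) : ℝ) from by push_cast; ring]
    exact h'
  rw [div_div_div_comm, div_div_eq_mul_div, mul_div_assoc, hent, hrow']
  exact mul_comm _ _
end
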